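/- arXiv:1404.2458 — 2 statements merged into one kernel-verified Lean document; each statement's English description precedes it below -/
import Mathlib

section
/- Suppose the costs observed under signal x and signal y satisfy |c_m(x) - c_m(y)| ≤ ℓ·N·κ·‖x - y‖₁ for each m = 1,...,M, where ℓ·N·κ·M < 1. If for every m the running minima are attained by the new observations (i.e., x_{2m-1} ≥ c_m(x) and y_{2m-1} ≥ c_m(y)) and the running maxima are attained by the old values (i.e., x_{2m} ≥ c_m(x) and y_{2m} ≥ c_m(y)), then the ℓ¹ distance of the updated signals is at most ℓ·N·κ·M·‖x - y‖₁ + Σ_m |x_{2m} - y_{2m}|, which is strictly less than ‖x - y‖₁ whenever Σ_m |x_{2m-1} - y_{2m-1}| > ℓ·N·κ·M·‖x - y‖₁. -/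
/-- Case 2 of the convergence proof: if the costs are Lipschitz-close with
constant ℓ·N·κ, ℓ·N·κ·M < 1, the running minima are attained by the new
observations and the running maxima by the old values, then the ℓ¹ distance of
the updated signals is at most ℓ·N·κ·M·‖x−y‖₁ + Σ_m |x_{2m} − y_{2m}|, which is
strictly smaller than ‖x−y‖₁ whenever Σ_m |x_{2m-1} − y_{2m-1}| > ℓ·N·κ·M·‖x−y‖₁. -/
theorem case2_strict_contraction (M N : ℕ) (ℓ κ : ℝ)
    (xlo xhi ylo yhi cx cy : Fin M → ℝ)
    (hc : ∀ m, |cx m - cy m|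
        ≤ ℓ * N * κ * ∑ m', (|xlo m' - ylo m'| + |xhi m' - yhi m'|))
    (hsmall : ℓ * N * κ * M < 1)
    (hminx : ∀ m, cx m ≤ xlo m) (hminy : ∀ m, cy m ≤ ylo m)
    (hmaxx : ∀ m, cx m ≤ xhi m) (hmaxy : ∀ m, cy m ≤ yhi m) :
    (∑ m, (|min (xlo m) (cx m) - min (ylo m) (cy m)|
         + |max (xhi m) (cx m) - max (yhi m) (cy m)|)
      ≤ ℓ * N * κ * M * (∑ m, (|xlo m - ylo m| + |xhi m - yhi m|))
        + ∑ m, |xhi m - yhi m|)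
    ∧ (ℓ * N * κ * M * (∑ m, (|xlo m - ylo m| + |xhi m - yhi m|))
          < ∑ m, |xlo m - ylo m| →
        ℓ * N * κ * M * (∑ m, (|xlo m - ylo m| + |xhi m - yhi m|))
          + ∑ m, |xhi m - yhi m|
        < ∑ m, (|xlo m - ylo m| + |xhi m - yhi m|)) := by
  constructor
  · have h1 : ∀ m : Fin M, |min (xlo m) (cx m) - min (ylo m) (cy m)|
         + |max (xhi m) (cx m) - max (yhi m) (cy m)|
        = |cx m - cy m| + |xhi m - yhi m| := by
      intro m
      rw [min_eq_right (hminx m), min_eq_right (hminy m),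
        max_eq_left (hmaxx m), max_eq_left (hmaxy m)]
    rw [Finset.sum_congr rfl fun m _ => h1 m, Finset.sum_add_distrib]
    gcongr
    calc ∑ m : Fin M, |cx m - cy m|
        ≤ ∑ _m : Fin M,
            ℓ * N * κ * ∑ m', (|xlo m' - ylo m'| + |xhi m' - yhi m'|) :=
          Finset.sum_le_sum fun m _ => hc m
      _ = ℓ * N * κ * M * (∑ m, (|xlo m - ylo m| + |xhi m - yhi m|)) := by
          simp [Finset.sum_const]; ring
  · intro h
    rw [Finset.sum_add_distrib] at h ⊢
    linarith
end

section
/- Let c₁ = c₂ = c where c(n) = 1 if n < (N+1)/2 and c(n) = (J+1)^{(2n-N)/N} if n ≥ (N+1)/2, for an odd integer N ≥ 3 and real J > 0. Then the social cost C(n₁, n₂) = (n₁/N)·c(n₁) + (n₂/N)·c(n₂), subject to n₁ + n₂ = N with n₁, n₂ ∈ ℕ, is minimized exactly at {n₁, n₂} = {⌊N/2⌋, ⌈N/2⌉}, where it equals (⌈N/2⌉/N)·(J+1)^{1/N} + ⌊N/2⌋/N. -/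
/-- In the price-of-flapping construction, the social cost
C(n₁,n₂) = (n₁/N)c(n₁) + (n₂/N)c(n₂) subject to n₁ + n₂ = N is minimized exactly
at the balanced split {⌈N/2⌉, ⌊N/2⌋}, with value (⌈N/2⌉/N)(J+1)^{1/N} + ⌊N/2⌋/N. -/
theorem balanced_split_minimizes_social_cost (N : ℕ) (hN : 3 ≤ N) (hodd : Odd N)
    (J : ℝ) (hJ : 0 < J) (c : ℕ → ℝ) (C : ℕ → ℕ → ℝ)
    (hc : ∀ n : ℕ, c n = if 2 * n < N + 1 then (1 : ℝ)
          else (J + 1) ^ ((2 * (n : ℝ) - N) / N))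
    (hC : ∀ n₁ n₂ : ℕ, C n₁ n₂ = ((n₁ : ℝ) / N) * c n₁ + ((n₂ : ℝ) / N) * c n₂) :
    C ((N + 1) / 2) (N / 2)
        = (((N + 1) / 2 : ℕ) : ℝ) / N * (J + 1) ^ ((1 : ℝ) / N)
          + ((N / 2 : ℕ) : ℝ) / N
    ∧ ∀ n₁ n₂ : ℕ, n₁ + n₂ = N →
        (C ((N + 1) / 2) (N / 2) ≤ C n₁ n₂
        ∧ (C n₁ n₂ = C ((N + 1) / 2) (N / 2) →
            (n₁ = (N + 1) / 2 ∧ n₂ = N / 2) ∨ (n₁ = N / 2 ∧ n₂ = (N + 1) / 2))) := by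
  obtain ⟨k, hk⟩ := hodd
  have h1 : (N + 1) / 2 = k + 1 := by omega
  have h2 : N / 2 = k := by omega
  have hNr : (0:ℝ) < N := by exact_mod_cast (by omega : 0 < N)
  have hNk : (N:ℝ) = 2 * k + 1 := by exact_mod_cast hk
  have ha : 1 < J + 1 := by linarith
  have ha1 : 1 < (J + 1) ^ ((1:ℝ)/N) := by
    apply Real.one_lt_rpow_iff_of_pos (by linarith) |>.mpr
    exact Or.inl ⟨ha, by positivity⟩
  have hck1 : c (k + 1) = (J + 1) ^ ((1:ℝ)/N) := by
    rw [hc, if_neg (by omega)]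
    congr 1
    push_cast
    rw [hNk]; ring
  have hck : c k = 1 := by rw [hc, if_pos (by omega)]
  simp only [h1, h2]
  have hval : C (k + 1) k = ((k+1:ℕ) : ℝ) / N * (J + 1) ^ ((1:ℝ)/N) + ((k:ℕ) : ℝ) / N := by
    rw [hC, hck1, hck]; push_cast; ring
  refine ⟨hval, ?_⟩
  have key : ∀ m n : ℕ, m + n = N → k + 1 ≤ m →
      C (k + 1) k ≤ C m n ∧ (C m n = C (k + 1) k → m = k + 1) := by
    intro m n hmn hm
    have hcn : c n = 1 := by rw [hc, if_pos (by omega)]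
    have hcm : c m = (J + 1) ^ ((2 * (m:ℝ) - N) / N) := by rw [hc, if_neg (by omega)]
    have hmr : (k:ℝ) + 1 ≤ m := by exact_mod_cast hm
    have hnr : (n:ℝ) = 2 * k + 1 - m := by
      have : (m:ℝ) + n = N := by exact_mod_cast hmn
      linarith [hNk]
    set a1 := (J + 1) ^ ((1:ℝ)/N) with ha1def
    set am := (J + 1) ^ ((2 * (m:ℝ) - N) / N) with hamdef
    have hale : a1 ≤ am := by
      apply Real.rpow_le_rpow_left_iff ha |>.mpr
      rw [div_le_div_iff_of_pos_right hNr]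
      linarith [hNk]
    have e1 : C (k + 1) k = (((k:ℝ) + 1) * a1 + k) / N := by
      rw [hC, hck1, hck]; push_cast; ring
    have e2 : C m n = ((m:ℝ) * am + n) / N := by
      rw [hC, hcm, hcn]; push_cast; ring
    have hmain : ((k:ℝ) + 1) * a1 + k ≤ (m:ℝ) * am + n := by
      nlinarith [mul_le_mul_of_nonneg_left hale (show (0:ℝ) ≤ m by linarith),
        mul_nonneg (show (0:ℝ) ≤ (m:ℝ) - (k + 1) by linarith)
          (show (0:ℝ) ≤ a1 - 1 by linarith)]
    constructor
    · rw [e1, e2]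
      exact (div_le_div_iff_of_pos_right hNr).mpr hmain
    · intro heq
      by_contra hne
      have hm2 : k + 2 ≤ m := by omega
      have hmr2 : (k:ℝ) + 2 ≤ m := by exact_mod_cast hm2
      have halt : a1 < am := by
        apply Real.rpow_lt_rpow_left_iff ha |>.mpr
        rw [div_lt_div_iff_of_pos_right hNr]
        linarith [hNk]
      have hmain' : ((k:ℝ) + 1) * a1 + k < (m:ℝ) * am + n := by
        nlinarith [mul_lt_mul_of_pos_left halt (show (0:ℝ) < m by linarith),
          mul_nonneg (show (0:ℝ) ≤ (m:ℝ) - (k + 1) by linarith)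
            (show (0:ℝ) ≤ a1 - 1 by linarith)]
      have : C (k + 1) k < C m n := by
        rw [e1, e2]
        exact (div_lt_div_iff_of_pos_right hNr).mpr hmain'
      linarith [heq.ge, this]
  intro n₁ n₂ hsum
  rcases le_or_gt n₁ k with h | h
  · have hkey := key n₂ n₁ (by omega) (by omega)
    have hsym : C n₁ n₂ = C n₂ n₁ := by rw [hC, hC]; ring
    refine ⟨hsym ▸ hkey.1, ?_⟩
    intro heq
    have := hkey.2 (by rw [← hsym]; exact heq)
    right; exact ⟨by omega, this⟩
  · have hkey := key n₁ n₂ (by omega) (by omega)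
    refine ⟨hkey.1, ?_⟩
    intro heq
    have hm := hkey.2 heq
    left; exact ⟨hm, by omega⟩
end
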